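/- Let m ≥ n, let A ∈ ℝ^{m×n} have full rank n, let u, p₁ be positive reals, and let Ṽ ∈ ℝ^{n×n} satisfy ‖ṼᵀṼ − I‖₂ ≤ p₁u < 1. Set Ã = AṼ with columns ã_j (which are nonzero). Then max_{i,j} (|A||Ṽ|)_{ij} / ‖ã_j‖₂ ≤ (1 + p₁u)κ₂(A) / (1 − p₁u). -/

import Mathlib

open scoped BigOperators
open Matrix

/-- Euclidean norm of a vector in `ℝ^m`. -/
noncomputable def vecNorm {m : ℕ} (v : Fin m → ℝ) : ℝ :=
  Real.sqrt (∑ i, v i ^ 2)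

/-- The `k`-th largest singular value of a real `m × n` matrix
(`k = 0` gives the largest). -/
noncomputable def sval {m n : ℕ} (A : Matrix (Fin m) (Fin n) ℝ) (k : Fin n) : ℝ :=
  Real.sqrt
    (((by simpa using Matrix.isHermitian_conjTranspose_mul_self A : (Aᵀ * A).IsHermitian).eigenvalues ∘
      Tuple.sort (by simpa using Matrix.isHermitian_conjTranspose_mul_self A : (Aᵀ * A).IsHermitian).eigenvalues) k.rev)

/-- Spectral norm: the largest singular value. -/
noncomputable def specNorm {m n : ℕ} (A : Matrix (Fin m) (Fin n) ℝ) : ℝ :=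
  ⨆ k, sval A k

/-- Smallest singular value. -/
noncomputable def sMin {m n : ℕ} (A : Matrix (Fin m) (Fin n) ℝ) : ℝ :=
  ⨅ k, sval A k

/-- Frobenius norm. -/
noncomputable def frobNorm {m n : ℕ} (A : Matrix (Fin m) (Fin n) ℝ) : ℝ :=
  Real.sqrt (∑ i, ∑ j, (A i j) ^ 2)

/-- Frobenius norm of the off-diagonal part of a square matrix. -/
noncomputable def offF {n : ℕ} (M : Matrix (Fin n) (Fin n) ℝ) : ℝ :=
  frobNorm (M - Matrix.diagonal (fun i => M i i))

/-- Diagonal matrix of inverse column norms `D(A)`. -/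
noncomputable def colScale {m n : ℕ} (A : Matrix (Fin m) (Fin n) ℝ) :
    Matrix (Fin n) (Fin n) ℝ :=
  Matrix.diagonal (fun j => (vecNorm (fun i => A i j))⁻¹)

/-- Condition number `κ₂(A) = σ_max(A) / σ_min(A)`. -/
noncomputable def kappa2 {m n : ℕ} (A : Matrix (Fin m) (Fin n) ℝ) : ℝ :=
  specNorm A / sMin A

/-- One-sided scaled condition number `κ₂ᴰ(A) = κ₂(A · D(A))`. -/
noncomputable def scaledCond {m n : ℕ} (A : Matrix (Fin m) (Fin n) ℝ) : ℝ :=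
  kappa2 (A * colScale A)

/-- Entrywise absolute value of a matrix. -/
def matAbs {m n : ℕ} (A : Matrix (Fin m) (Fin n) ℝ) : Matrix (Fin m) (Fin n) ℝ :=
  fun i j => |A i j|

/-- Rayleigh quotient bounds for a real symmetric matrix. -/
lemma rayleigh_aux {k : ℕ} {B : Matrix (Fin k) (Fin k) ℝ} (hB : B.IsHermitian)
    {lo hi : ℝ} (hlo : ∀ i, lo ≤ hB.eigenvalues i) (hhi : ∀ i, hB.eigenvalues i ≤ hi)
    (x : Fin k → ℝ) :
    lo * (x ⬝ᵥ x) ≤ x ⬝ᵥ (B *ᵥ x) ∧ x ⬝ᵥ (B *ᵥ x) ≤ hi * (x ⬝ᵥ x) := by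
  classical
  set U : Matrix (Fin k) (Fin k) ℝ := (hB.eigenvectorUnitary : Matrix (Fin k) (Fin k) ℝ) with hU
  have hstar : star U = Uᵀ := by
    rw [Matrix.star_eq_conjTranspose, conjTranspose_eq_transpose_of_trivial]
  have hUU : U * Uᵀ = 1 := by
    rw [← hstar]
    exact (Matrix.mem_unitaryGroup_iff).mp hB.eigenvectorUnitary.2
  have hspec : B = U * Matrix.diagonal hB.eigenvalues * Uᵀ := by
    rw [← hstar]
    have := hB.spectral_theorem
    simpa using this
  set y : Fin k → ℝ := Uᵀ *ᵥ x with hy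
  have key : ∀ (M : Matrix (Fin k) (Fin k) ℝ) (w : Fin k → ℝ),
      x ⬝ᵥ (M *ᵥ w) = (Mᵀ *ᵥ x) ⬝ᵥ w := by
    intro M w
    rw [dotProduct_mulVec, ← vecMul_transpose, transpose_transpose]
  have hxBx : x ⬝ᵥ (B *ᵥ x) = ∑ i, hB.eigenvalues i * (y i) ^ 2 := by
    conv_lhs => rw [hspec]
    rw [← mulVec_mulVec, ← mulVec_mulVec, key]
    simp only [transpose_transpose, ← hy]
    simp only [dotProduct, mulVec_diagonal]
    exact Finset.sum_congr rfl fun i _ => by ring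
  have hyy : y ⬝ᵥ y = x ⬝ᵥ x := by
    have h1 : x ⬝ᵥ (U *ᵥ y) = y ⬝ᵥ y := by rw [key U y]
    rw [← h1, hy, mulVec_mulVec, hUU, one_mulVec]
  have hyysum : y ⬝ᵥ y = ∑ i, (y i) ^ 2 := by
    simp [dotProduct, sq]
  constructor
  · rw [hxBx, ← hyy, hyysum, Finset.mul_sum]
    exact Finset.sum_le_sum fun i _ => mul_le_mul_of_nonneg_right (hlo i) (sq_nonneg _)
  · rw [hxBx, ← hyy, hyysum, Finset.mul_sum]
    exact Finset.sum_le_sum fun i _ => mul_le_mul_of_nonneg_right (hhi i) (sq_nonneg _)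

/-- For any real rectangular matrix, `x ⬝ (AᵀA x) = ‖Ax‖²`. -/
lemma dot_gram {a b : ℕ} (A : Matrix (Fin a) (Fin b) ℝ) (x : Fin b → ℝ) :
    x ⬝ᵥ ((Aᵀ * A) *ᵥ x) = (A *ᵥ x) ⬝ᵥ (A *ᵥ x) := by
  rw [← mulVec_mulVec, dotProduct_mulVec, vecMul_transpose]

/-- Rayleigh bounds in terms of the extreme sorted eigenvalues of `AᵀA`,
plus relations to `sval`. -/
lemma gram_facts {a b : ℕ} [NeZero b] (A : Matrix (Fin a) (Fin b) ℝ) :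
    ∃ lo hi : ℝ, 0 ≤ lo ∧ lo ≤ hi ∧
      sval A 0 = Real.sqrt hi ∧ sval A (Fin.rev 0) = Real.sqrt lo ∧
      (∀ x : Fin b → ℝ, lo * (x ⬝ᵥ x) ≤ (A *ᵥ x) ⬝ᵥ (A *ᵥ x)) ∧
      (∀ x : Fin b → ℝ, (A *ᵥ x) ⬝ᵥ (A *ᵥ x) ≤ hi * (x ⬝ᵥ x)) ∧
      (∀ k : Fin b, Real.sqrt lo ≤ sval A k) ∧
      (A.rank = b → 0 < lo) := by
  classical
  have hAH : Aᴴ = Aᵀ := conjTranspose_eq_transpose_of_trivial A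
  have hB : (Aᵀ * A).IsHermitian := by simpa using Matrix.isHermitian_conjTranspose_mul_self A
  set μ := hB.eigenvalues with hμ
  set σ := Tuple.sort μ with hσ
  have hpsd : (Aᴴ * A).PosSemidef := Matrix.posSemidef_conjTranspose_mul_self A
  have hnn : ∀ i, 0 ≤ μ i := fun i => hpsd.eigenvalues_nonneg i
  have hmono : Monotone (μ ∘ σ) := Tuple.monotone_sort μ
  have hlo_all : ∀ i, μ (σ 0) ≤ μ i := by
    intro i
    have h1 : μ (σ (σ.symm i)) = μ i := by rw [Equiv.apply_symm_apply]
    rw [← h1]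
    exact hmono (bot_le (a := σ.symm i))
  have hhi_all : ∀ i, μ i ≤ μ (σ (Fin.rev 0)) := by
    intro i
    have h1 : μ (σ (σ.symm i)) = μ i := by rw [Equiv.apply_symm_apply]
    rw [← h1]
    refine hmono ?_
    rw [Fin.rev_zero_eq_top b]
    exact le_top
  refine ⟨μ (σ 0), μ (σ (Fin.rev 0)), hnn _, hhi_all _, ?_, ?_, ?_, ?_, ?_, ?_⟩
  · rfl
  · simp only [sval, Fin.rev_rev]
    rfl
  · intro x
    have := (rayleigh_aux hB hlo_all hhi_all x).1
    rwa [dot_gram] at this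
  · intro x
    have := (rayleigh_aux hB hlo_all hhi_all x).2
    rwa [dot_gram] at this
  · intro k
    exact Real.sqrt_le_sqrt (hlo_all (σ k.rev))
  · intro hr
    have hrank : (Aᴴ * A).rank = Fintype.card (Fin b) := by
      rw [hAH, Matrix.rank_transpose_mul_self, hr, Fintype.card_fin]
    have hcard := hB.rank_eq_card_non_zero_eigs
    have hall : ∀ i, μ i ≠ 0 := by
      intro i hi
      have hlt : Fintype.card {j // μ j ≠ 0} < Fintype.card (Fin b) :=
        Fintype.card_subtype_lt (x := i) (by simp [hi])
      rw [← hcard, ← hAH, hrank] at hlt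
      exact lt_irrefl _ hlt
    exact lt_of_le_of_ne (hnn _) (Ne.symm (hall _))

/-- Bound on the quantity `α = max_{i,j} (|A||Ṽ|)_{ij}/‖ã_j‖₂`. -/
theorem alpha_bound
    {m n : ℕ} (hmn : n ≤ m)
    (A : Matrix (Fin m) (Fin n) ℝ) (hrank : A.rank = n)
    (u p₁ : ℝ) (hu : 0 < u) (hp₁ : 0 < p₁)
    (V : Matrix (Fin n) (Fin n) ℝ)
    (hV : specNorm (Vᵀ * V - 1) ≤ p₁ * u) (hp₁u : p₁ * u < 1) :
    ∀ i j, (matAbs A * matAbs V) i j / vecNorm (fun i' => (A * V) i' j) ≤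
      (1 + p₁ * u) * kappa2 A / (1 - p₁ * u) := by
  intro i j
  haveI : NeZero n := ⟨fun h => by subst h; exact j.elim0⟩
  set t := p₁ * u with ht
  have ht0 : 0 < t := mul_pos hp₁ hu
  have ht1 : t < 1 := hp₁u
  -- Gram facts for A
  obtain ⟨lo, hi, hlo0, hlohi, hsv0, hsvrev, hRlo, hRhi, hsvall, hlopos'⟩ := gram_facts A
  have hlopos : 0 < lo := hlopos' hrank
  -- spectral norm bounds
  have hSub : BddAbove (Set.range (sval A)) := (Set.finite_range _).bddAbove
  have hS_ge : Real.sqrt hi ≤ specNorm A := by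
    rw [← hsv0]; exact le_ciSup hSub 0
  have hs_le : sMin A ≤ Real.sqrt lo := by
    rw [← hsvrev]; exact ciInf_le ((Set.finite_range _).bddBelow) _
  have hs_ge : Real.sqrt lo ≤ sMin A := le_ciInf hsvall
  have hs_pos : 0 < sMin A := lt_of_lt_of_le (Real.sqrt_pos.mpr hlopos) hs_ge
  -- bound on diagonal entries of VᵀV - 1
  set M : Matrix (Fin n) (Fin n) ℝ := Vᵀ * V - 1 with hM
  have hMdiag : |M j j| ≤ t := by
    obtain ⟨lo', hi', hlo0', _, hsv0', _, _, hRhi', _, _⟩ := gram_facts M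
    have hspecM0 : (0:ℝ) ≤ sval M 0 := by rw [hsv0']; exact Real.sqrt_nonneg _
    have hspecM : sval M 0 ≤ specNorm M :=
      le_ciSup ((Set.finite_range (sval M)).bddAbove) 0
    have hsq : (M j j) ^ 2 ≤ t ^ 2 := by
      have h1 : (M j j) ^ 2 ≤ (M *ᵥ Pi.single j 1) ⬝ᵥ (M *ᵥ Pi.single j 1) := by
        have hcol : M *ᵥ Pi.single j 1 = fun i' => M i' j := by
          ext i'; simp [mulVec_single]
        rw [hcol]
        simp only [dotProduct, ← sq]
        exact Finset.single_le_sum (f := fun i' => (M i' j)^2)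
          (fun _ _ => sq_nonneg _) (Finset.mem_univ j)
      have h2 : (M *ᵥ Pi.single j 1) ⬝ᵥ (M *ᵥ Pi.single j 1) ≤ hi' * 1 := by
        have := hRhi' (Pi.single j 1)
        have hee : (Pi.single j 1 : Fin n → ℝ) ⬝ᵥ Pi.single j 1 = 1 := by
          simp [dotProduct, Pi.single_apply]
        rwa [hee] at this
      have h3 : hi' ≤ t ^ 2 := by
        have hhi0 : 0 ≤ hi' := le_trans hlo0' (by assumption)
        have : Real.sqrt hi' ≤ t := by
          calc Real.sqrt hi' = sval M 0 := hsv0'.symm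
          _ ≤ specNorm M := hspecM
          _ ≤ t := hV
        calc hi' = (Real.sqrt hi') ^ 2 := (Real.sq_sqrt hhi0).symm
        _ ≤ t ^ 2 := by
            exact pow_le_pow_left₀ (Real.sqrt_nonneg _) this 2
      calc (M j j)^2 ≤ hi' * 1 := le_trans h1 h2
      _ = hi' := mul_one _
      _ ≤ t ^ 2 := h3
    have h4 := Real.sqrt_le_sqrt hsq
    rwa [Real.sqrt_sq_eq_abs, Real.sqrt_sq ht0.le] at h4
  -- column of V
  set v : Fin n → ℝ := fun k => V k j with hv
  have hvv : v ⬝ᵥ v = (Vᵀ * V) j j := by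
    simp [dotProduct, mul_apply, transpose_apply, hv]
  have hMjj : M j j = (Vᵀ * V) j j - 1 := by
    simp [hM, Matrix.sub_apply, one_apply]
  have hvub : v ⬝ᵥ v ≤ 1 + t := by
    have := (abs_le.mp hMdiag).2
    rw [hMjj] at this
    rw [hvv]; linarith
  have hvlb : 1 - t ≤ v ⬝ᵥ v := by
    have := (abs_le.mp hMdiag).1
    rw [hMjj] at this
    rw [hvv]; linarith
  -- numerator
  set N := (matAbs A * matAbs V) i j with hNdef
  have hNsum : N = ∑ k, |A i k| * |V k j| := by
    simp [hNdef, mul_apply, matAbs]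
  have hN0 : 0 ≤ N := by
    rw [hNsum]
    exact Finset.sum_nonneg fun k _ => mul_nonneg (abs_nonneg _) (abs_nonneg _)
  -- row of A
  set r : Fin n → ℝ := fun k => A i k with hr
  have hrr0 : 0 ≤ r ⬝ᵥ r := Finset.sum_nonneg fun k _ => mul_self_nonneg _
  have hrow : r ⬝ᵥ r ≤ hi := by
    have hentry : (A *ᵥ r) i = r ⬝ᵥ r := by
      simp [mulVec, dotProduct, hr]
    have h1 : (r ⬝ᵥ r) ^ 2 ≤ (A *ᵥ r) ⬝ᵥ (A *ᵥ r) := by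
      rw [← hentry]
      simp only [dotProduct, ← sq]
      exact Finset.single_le_sum (f := fun i' => ((A *ᵥ r) i')^2)
        (fun _ _ => sq_nonneg _) (Finset.mem_univ i)
    have h2 := hRhi r
    rcases eq_or_lt_of_le hrr0 with hz | hpos
    · rw [← hz]; exact le_trans hlo0 hlohi
    · have h3 : (r ⬝ᵥ r) * (r ⬝ᵥ r) ≤ hi * (r ⬝ᵥ r) := by
        calc (r ⬝ᵥ r) * (r ⬝ᵥ r) = (r ⬝ᵥ r) ^ 2 := (sq _).symm
        _ ≤ (A *ᵥ r) ⬝ᵥ (A *ᵥ r) := h1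
        _ ≤ hi * (r ⬝ᵥ r) := h2
      exact le_of_mul_le_mul_right h3 hpos
  have hCS : N ^ 2 ≤ hi * (1 + t) := by
    have hcs := Finset.sum_mul_sq_le_sq_mul_sq Finset.univ
      (fun k => |A i k|) (fun k => |V k j|)
    have hra : (∑ k, |A i k| ^ 2) = r ⬝ᵥ r := by
      simp [dotProduct, sq_abs, hr, sq]
    have hvb : (∑ k, |V k j| ^ 2) = v ⬝ᵥ v := by
      simp [dotProduct, sq_abs, hv, sq]
    rw [hNsum]
    calc (∑ k, |A i k| * |V k j|) ^ 2 ≤ (∑ k, |A i k| ^ 2) * (∑ k, |V k j| ^ 2) := hcs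
    _ = (r ⬝ᵥ r) * (v ⬝ᵥ v) := by rw [hra, hvb]
    _ ≤ hi * (1 + t) := by
        exact mul_le_mul hrow hvub (le_trans (by linarith) hvlb) (le_trans hlo0 hlohi)
  have hNle : N ≤ Real.sqrt hi * Real.sqrt (1 + t) := by
    have := Real.sqrt_le_sqrt hCS
    rwa [Real.sqrt_sq hN0, Real.sqrt_mul (le_trans hlo0 hlohi)] at this
  -- denominator
  set d := vecNorm (fun i' => (A * V) i' j) with hd
  have hAv : (fun i' => (A * V) i' j) = A *ᵥ v := by
    ext i'; simp [mul_apply, mulVec, dotProduct, hv]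
  have hd2 : lo * (1 - t) ≤ (A *ᵥ v) ⬝ᵥ (A *ᵥ v) := by
    calc lo * (1 - t) ≤ lo * (v ⬝ᵥ v) := mul_le_mul_of_nonneg_left hvlb hlo0
    _ ≤ (A *ᵥ v) ⬝ᵥ (A *ᵥ v) := hRlo v
  have hdge : Real.sqrt lo * Real.sqrt (1 - t) ≤ d := by
    have hsum : (∑ i', ((A * V) i' j) ^ 2) = (A *ᵥ v) ⬝ᵥ (A *ᵥ v) := by
      simp only [dotProduct, sq]
      refine Finset.sum_congr rfl fun i' _ => ?_
      have he : (A * V) i' j = (A *ᵥ v) i' := by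
        simp [mul_apply, mulVec, dotProduct, hv]
      rw [he]
    rw [hd, vecNorm, ← Real.sqrt_mul hlo0]
    apply Real.sqrt_le_sqrt
    rw [hsum]
    exact hd2
  have h1t : (0:ℝ) < 1 - t := by linarith
  have hsq1t : (1:ℝ) - t ≤ Real.sqrt (1 - t) := by
    have h := Real.sqrt_le_sqrt (show (1-t)^2 ≤ 1 - t by nlinarith)
    rwa [Real.sqrt_sq h1t.le] at h
  have hsq1t' : Real.sqrt (1 + t) ≤ 1 + t := by
    have h := Real.sqrt_le_sqrt (show (1:ℝ) + t ≤ (1+t)^2 by nlinarith)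
    rwa [Real.sqrt_sq (by linarith : (0:ℝ) ≤ 1 + t)] at h
  have hdenom1 : 0 < sMin A * Real.sqrt (1 - t) :=
    mul_pos hs_pos (Real.sqrt_pos.mpr h1t)
  have hdge2 : sMin A * Real.sqrt (1 - t) ≤ d :=
    le_trans (mul_le_mul_of_nonneg_right hs_le (Real.sqrt_nonneg _)) hdge
  have hS0 : 0 ≤ specNorm A := le_trans (Real.sqrt_nonneg _) hS_ge
  have step1 : N / d ≤ (Real.sqrt hi * Real.sqrt (1 + t)) / (sMin A * Real.sqrt (1 - t)) :=
    div_le_div₀ (mul_nonneg (Real.sqrt_nonneg _) (Real.sqrt_nonneg _)) hNle hdenom1 hdge2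
  have step2 : (Real.sqrt hi * Real.sqrt (1 + t)) / (sMin A * Real.sqrt (1 - t)) ≤
      (specNorm A * (1 + t)) / (sMin A * (1 - t)) := by
    apply div_le_div₀ (mul_nonneg hS0 (by linarith)) ?_ (mul_pos hs_pos h1t) ?_
    · exact mul_le_mul (le_trans (Real.sqrt_le_sqrt le_rfl) hS_ge) hsq1t'
        (Real.sqrt_nonneg _) hS0
    · exact mul_le_mul_of_nonneg_left hsq1t hs_pos.le
  have step3 : (specNorm A * (1 + t)) / (sMin A * (1 - t)) =
      (1 + t) * kappa2 A / (1 - t) := by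
    rw [kappa2]
    field_simp
  calc N / d ≤ _ := step1
  _ ≤ _ := step2
  _ = _ := step3
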